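/- Assume g satisfies conditions (A1)–(A3) on (a,b), let F be the distribution function with density p(y) = c₁ e^{−G(y)} on (a,b), and for z ∈ (a,b) let f_z be the Stein solution defined by f_z(w) = F(w)(1 − F(z))/p(w) for w ≤ z and f_z(w) = F(z)(1 − F(w))/p(w) for w > z. Then the function w ↦ g(w) f_z(w) is non-decreasing on (a,b). -/

import Mathlib

open MeasureTheory Filter Set

/-- The open interval `(a, b) ⊆ ℝ` determined by extended-real endpoints. -/
def strip (a b : EReal) : Set ℝ := {x : ℝ | a < (x : EReal) ∧ (x : EReal) < b}

/-- The density `p(y) = c₁ e^{-G(y)}`, `G(y) = ∫_{w₀}^y g`. -/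
noncomputable def steinPdf (g : ℝ → ℝ) (w₀ c₁ : ℝ) (y : ℝ) : ℝ :=
  c₁ * Real.exp (-(∫ t in w₀..y, g t))

/-- The distribution function `F` with density `p` on `(a, b)`. -/
noncomputable def steinCDF (g : ℝ → ℝ) (a b : EReal) (w₀ c₁ : ℝ) (w : ℝ) : ℝ :=
  ∫ y in strip a b ∩ Set.Iic w, steinPdf g w₀ c₁ y

/-- The Stein solution `f_z`: `f_z(w) = F(w)(1-F(z))/p(w)` for `w ≤ z`, and
`f_z(w) = F(z)(1-F(w))/p(w)` for `w > z`. -/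
noncomputable def steinSol (g : ℝ → ℝ) (a b : EReal) (w₀ c₁ : ℝ) (z w : ℝ) : ℝ :=
  if w ≤ z then steinCDF g a b w₀ c₁ w * (1 - steinCDF g a b w₀ c₁ z) / steinPdf g w₀ c₁ w
  else steinCDF g a b w₀ c₁ z * (1 - steinCDF g a b w₀ c₁ w) / steinPdf g w₀ c₁ w

lemma strip_isOpen (a b : EReal) : IsOpen (strip a b) := by
  have : strip a b = ((↑) : ℝ → EReal) ⁻¹' (Ioi a) ∩ ((↑) : ℝ → EReal) ⁻¹' (Iio b) := rfl
  rw [this]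
  exact (isOpen_Ioi.preimage continuous_coe_real_ereal).inter
    (isOpen_Iio.preimage continuous_coe_real_ereal)

lemma strip_ordConnected (a b : EReal) : OrdConnected (strip a b) := by
  constructor
  rintro x ⟨hx1, hx2⟩ y ⟨hy1, hy2⟩ t ⟨ht1, ht2⟩
  exact ⟨lt_of_lt_of_le hx1 (EReal.coe_le_coe_iff.2 ht1),
    lt_of_le_of_lt (EReal.coe_le_coe_iff.2 ht2) hy2⟩

section
variable {a b : EReal} {g : ℝ → ℝ} {w₀ c₁ : ℝ}

lemma steinPdf_hasDerivAt (hw₀ : w₀ ∈ strip a b)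
    (hgc : ContinuousOn g (strip a b)) {w : ℝ} (hw : w ∈ strip a b) :
    HasDerivAt (steinPdf g w₀ c₁) (-(g w * steinPdf g w₀ c₁ w)) w := by
  have hG : HasDerivAt (fun y => ∫ t in w₀..y, g t) (g w) w := by
    apply intervalIntegral.integral_hasDerivAt_right
    · exact (hgc.mono ((strip_ordConnected a b).uIcc_subset hw₀ hw)).intervalIntegrable
    · exact hgc.stronglyMeasurableAtFilter (strip_isOpen a b) w hw
    · exact (hgc w hw).continuousAt ((strip_isOpen a b).mem_nhds hw)
  have := ((hG.fun_neg).exp).const_mul c₁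
  refine this.congr_deriv ?_
  simp [steinPdf]; ring

lemma steinPdf_continuousOn (hw₀ : w₀ ∈ strip a b)
    (hgc : ContinuousOn g (strip a b)) :
    ContinuousOn (steinPdf g w₀ c₁) (strip a b) :=
  fun w hw => (steinPdf_hasDerivAt hw₀ hgc hw).continuousAt.continuousWithinAt

lemma steinPdf_integrableOn
    (hnorm : ∫ y in strip a b, steinPdf g w₀ c₁ y = 1) :
    IntegrableOn (steinPdf g w₀ c₁) (strip a b) := by
  by_contra h
  rw [integral_undef h] at hnorm
  norm_num at hnorm

lemma steinCDF_hasDerivAt (hw₀ : w₀ ∈ strip a b)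
    (hgc : ContinuousOn g (strip a b))
    (hnorm : ∫ y in strip a b, steinPdf g w₀ c₁ y = 1)
    {w : ℝ} (hw : w ∈ strip a b) :
    HasDerivAt (steinCDF g a b w₀ c₁) (steinPdf g w₀ c₁ w) w := by
  set p := steinPdf g w₀ c₁ with hp
  have hpi : IntegrableOn p (strip a b) := steinPdf_integrableOn hnorm
  have key : ∀ x y : ℝ, x ∈ strip a b → y ∈ strip a b → x ≤ y →
      steinCDF g a b w₀ c₁ y = steinCDF g a b w₀ c₁ x + ∫ t in x..y, p t := by
    intro x y hx hy hxy
    have hsub : Ioc x y ⊆ strip a b := fun t ht =>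
      (strip_ordConnected a b).out hx hy ⟨le_of_lt ht.1, ht.2⟩
    have hset : strip a b ∩ Iic y = (strip a b ∩ Iic x) ∪ Ioc x y := by
      ext t
      constructor
      · rintro ⟨htS, hty⟩
        rcases le_or_gt t x with h | h
        · exact Or.inl ⟨htS, h⟩
        · exact Or.inr ⟨h, hty⟩
      · rintro (⟨htS, htx⟩ | ht)
        · exact ⟨htS, htx.trans hxy⟩
        · exact ⟨hsub ht, ht.2⟩
    rw [steinCDF, hset, setIntegral_union ?_ measurableSet_Ioc
        (hpi.mono_set inter_subset_left) (hpi.mono_set hsub),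
      intervalIntegral.integral_of_le hxy]
    · rfl
    · exact (Iic_disjoint_Ioc le_rfl).mono_left inter_subset_right
  have hev : ∀ᶠ x in nhds w, steinCDF g a b w₀ c₁ x
      = steinCDF g a b w₀ c₁ w + ∫ t in w..x, p t := by
    filter_upwards [(strip_isOpen a b).mem_nhds hw] with x hx
    rcases le_total w x with h | h
    · exact key w x hw hx h
    · have := key x w hx hw h
      rw [intervalIntegral.integral_symm]
      linarith
  have hderiv : HasDerivAt (fun x => steinCDF g a b w₀ c₁ w + ∫ t in w..x, p t) (p w) w := by
    apply HasDerivAt.const_add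
    apply intervalIntegral.integral_hasDerivAt_right
    · exact ((steinPdf_continuousOn hw₀ hgc).mono
        ((strip_ordConnected a b).uIcc_subset hw hw)).intervalIntegrable
    · exact (steinPdf_continuousOn hw₀ hgc).stronglyMeasurableAtFilter (strip_isOpen a b) w hw
    · exact (steinPdf_hasDerivAt hw₀ hgc hw).continuousAt
  exact hderiv.congr_of_eventuallyEq hev

lemma steinPdf_nonneg (hc₁ : 0 < c₁) (y : ℝ) : (0:ℝ) ≤ steinPdf g w₀ c₁ y :=
  le_of_lt (mul_pos hc₁ (Real.exp_pos _))

lemma steinCDF_nonneg (hc₁ : 0 < c₁) (w : ℝ) : 0 ≤ steinCDF g a b w₀ c₁ w :=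
  setIntegral_nonneg ((strip_isOpen a b).measurableSet.inter measurableSet_Iic)
    (fun y _ => steinPdf_nonneg hc₁ y)

lemma steinCDF_le_one (hc₁ : 0 < c₁)
    (hnorm : ∫ y in strip a b, steinPdf g w₀ c₁ y = 1) (w : ℝ) :
    steinCDF g a b w₀ c₁ w ≤ 1 := by
  rw [← hnorm]
  apply setIntegral_mono_set
  · exact steinPdf_integrableOn hnorm
  · exact Eventually.of_forall (fun y => steinPdf_nonneg hc₁ y)
  · exact HasSubset.Subset.eventuallyLE inter_subset_left

lemma deriv_nonneg_of_monotoneOn {S : Set ℝ} (hS : IsOpen S) {g : ℝ → ℝ}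
    (hg : MonotoneOn g S) {w : ℝ} (hw : w ∈ S) (hd : DifferentiableAt ℝ g w) :
    0 ≤ deriv g w := by
  have hslope : Tendsto (slope g w) (nhdsWithin w (Ioi w)) (nhds (deriv g w)) :=
    (hasDerivAt_iff_tendsto_slope.1 hd.hasDerivAt).mono_left
      (nhdsWithin_mono w (fun x hx => ne_of_gt hx))
  refine ge_of_tendsto hslope ?_
  filter_upwards [eventually_nhdsWithin_of_eventually_nhds (hS.eventually_mem hw),
    self_mem_nhdsWithin] with x hxS hxw
  rw [slope_def_field]
  exact div_nonneg (sub_nonneg.2 (hg hw hxS (le_of_lt hxw))) (sub_nonneg.2 (le_of_lt hxw))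

lemma neBot_comap_left {w : ℝ} (hw : w ∈ strip a b) :
    (Filter.comap (fun x : ℝ => (x : EReal)) (nhdsWithin a (Set.Ioi a))).NeBot := by
  rw [Filter.comap_neBot_iff]
  intro t ht
  rcases mem_nhdsWithin.1 ht with ⟨u, hu, hau, hsub⟩
  haveI : (nhdsWithin a (Set.Ioi a)).NeBot := nhdsGT_neBot_of_exists_gt ⟨(w : EReal), hw.1⟩
  have h2 : u ∩ Ioi a ∈ nhdsWithin a (Set.Ioi a) :=
    inter_mem (mem_nhdsWithin_of_mem_nhds (hu.mem_nhds hau)) self_mem_nhdsWithin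
  obtain ⟨q, hq⟩ := EReal.denseRange_ratCast.exists_mem_open (hu.inter isOpen_Ioi)
    (Filter.nonempty_of_mem h2)
  exact ⟨(q : ℝ), hsub hq⟩

lemma eventually_mem_left {w : ℝ} (hw : w ∈ strip a b) :
    ∀ᶠ x in Filter.comap (fun x : ℝ => (x : EReal)) (nhdsWithin a (Set.Ioi a)),
      x ∈ strip a b ∧ x ≤ w := by
  have h1 : {x : ℝ | (x : EReal) ∈ Ioi a} ∈
      Filter.comap (fun x : ℝ => (x : EReal)) (nhdsWithin a (Set.Ioi a)) :=
    Filter.preimage_mem_comap self_mem_nhdsWithin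
  have h2 : {x : ℝ | (x : EReal) ∈ Iio ((w : ℝ) : EReal)} ∈
      Filter.comap (fun x : ℝ => (x : EReal)) (nhdsWithin a (Set.Ioi a)) :=
    Filter.preimage_mem_comap (mem_nhdsWithin_of_mem_nhds (isOpen_Iio.mem_nhds hw.1))
  filter_upwards [h1, h2] with x hx1 hx2
  have hxw : x < w := EReal.coe_lt_coe_iff.1 hx2
  exact ⟨⟨hx1, lt_trans (EReal.coe_lt_coe_iff.2 hxw) hw.2⟩, le_of_lt hxw⟩

lemma neBot_comap_right {w : ℝ} (hw : w ∈ strip a b) :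
    (Filter.comap (fun x : ℝ => (x : EReal)) (nhdsWithin b (Set.Iio b))).NeBot := by
  rw [Filter.comap_neBot_iff]
  intro t ht
  rcases mem_nhdsWithin.1 ht with ⟨u, hu, hau, hsub⟩
  haveI : (nhdsWithin b (Set.Iio b)).NeBot := nhdsLT_neBot_of_exists_lt ⟨(w : EReal), hw.2⟩
  have h2 : u ∩ Iio b ∈ nhdsWithin b (Set.Iio b) :=
    inter_mem (mem_nhdsWithin_of_mem_nhds (hu.mem_nhds hau)) self_mem_nhdsWithin
  obtain ⟨q, hq⟩ := EReal.denseRange_ratCast.exists_mem_open (hu.inter isOpen_Iio)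
    (Filter.nonempty_of_mem h2)
  exact ⟨(q : ℝ), hsub hq⟩

lemma eventually_mem_right {w : ℝ} (hw : w ∈ strip a b) :
    ∀ᶠ x in Filter.comap (fun x : ℝ => (x : EReal)) (nhdsWithin b (Set.Iio b)),
      x ∈ strip a b ∧ w ≤ x := by
  have h1 : {x : ℝ | (x : EReal) ∈ Iio b} ∈
      Filter.comap (fun x : ℝ => (x : EReal)) (nhdsWithin b (Set.Iio b)) :=
    Filter.preimage_mem_comap self_mem_nhdsWithin
  have h2 : {x : ℝ | (x : EReal) ∈ Ioi ((w : ℝ) : EReal)} ∈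
      Filter.comap (fun x : ℝ => (x : EReal)) (nhdsWithin b (Set.Iio b)) :=
    Filter.preimage_mem_comap (mem_nhdsWithin_of_mem_nhds (isOpen_Ioi.mem_nhds hw.2))
  filter_upwards [h1, h2] with x hx1 hx2
  have hxw : w < x := EReal.coe_lt_coe_iff.1 hx2
  exact ⟨⟨lt_trans hw.1 (EReal.coe_lt_coe_iff.2 hxw), hx1⟩, le_of_lt hxw⟩

end

/-- Lemma 4.1, (4.6): `w ↦ g(w) f_z(w)` is non-decreasing on `(a,b)`. -/
theorem steinSol_gMul_monotone
    (a b : EReal) (hab : a < b) (g : ℝ → ℝ) (w₀ c₁ : ℝ)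
    (hw₀ : w₀ ∈ strip a b) (hc₁ : 0 < c₁)
    (hnorm : ∫ y in strip a b, steinPdf g w₀ c₁ y = 1)
    -- condition (A1)
    (hg_mono : MonotoneOn g (strip a b))
    (hg_sign : ∀ w ∈ strip a b, 0 ≤ (w - w₀) * g w)
    -- condition (A2)
    (hg_diff : ∀ w ∈ strip a b, DifferentiableAt ℝ g w)
    (hg'_diff : ∀ w ∈ strip a b, DifferentiableAt ℝ (deriv g) w)
    (hg'_cont : ContinuousOn (deriv g) (strip a b))
    (hg_ineq : ∀ w ∈ strip a b, 0 ≤ 2 * (deriv g w) ^ 2 - g w * deriv (deriv g) w)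
    -- condition (A3)
    (hlim_a : Tendsto (fun y => g y * steinPdf g w₀ c₁ y)
      (Filter.comap (fun x : ℝ => (x : EReal)) (nhdsWithin a (Set.Ioi a))) (nhds 0))
    (hlim_b : Tendsto (fun y => g y * steinPdf g w₀ c₁ y)
      (Filter.comap (fun x : ℝ => (x : EReal)) (nhdsWithin b (Set.Iio b))) (nhds 0))
    (z : ℝ) (hz : z ∈ strip a b) :
    MonotoneOn (fun w => g w * steinSol g a b w₀ c₁ z w) (strip a b) := by
  have hSo := strip_isOpen a b
  have hSc : Convex ℝ (strip a b) := (strip_ordConnected a b).convex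
  have hgc : ContinuousOn g (strip a b) :=
    fun w hw => (hg_diff w hw).continuousAt.continuousWithinAt
  set p := steinPdf g w₀ c₁ with hpdef
  set F := steinCDF g a b w₀ c₁ with hFdef
  have hppos : ∀ w, 0 < p w := fun w => mul_pos hc₁ (Real.exp_pos _)
  have hpd : ∀ w ∈ strip a b, HasDerivAt p (-(g w * p w)) w :=
    fun w hw => steinPdf_hasDerivAt hw₀ hgc hw
  have hFd : ∀ w ∈ strip a b, HasDerivAt F (p w) w :=
    fun w hw => steinCDF_hasDerivAt hw₀ hgc hnorm hw
  have hF0 : ∀ w, 0 ≤ F w := steinCDF_nonneg hc₁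
  have hF1 : ∀ w, F w ≤ 1 := steinCDF_le_one hc₁ hnorm
  have hg' : ∀ w ∈ strip a b, 0 ≤ deriv g w :=
    fun w hw => deriv_nonneg_of_monotoneOn hSo hg_mono hw (hg_diff w hw)
  set U : ℝ → ℝ := fun w => (deriv g w + g w ^ 2) * F w + g w * p w with hUdef
  set V : ℝ → ℝ := fun w => (deriv g w + g w ^ 2) * (1 - F w) - g w * p w with hVdef
  have hUd : ∀ w ∈ strip a b, HasDerivAt U
      ((deriv (deriv g) w + 2 * g w * deriv g w) * F w + 2 * deriv g w * p w) w := by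
    intro w hw
    have h1 : HasDerivAt (fun x => deriv g x + g x ^ 2)
        (deriv (deriv g) w + 2 * g w * deriv g w) w := by
      have := (hg'_diff w hw).hasDerivAt.fun_add ((hg_diff w hw).hasDerivAt.fun_pow 2)
      refine this.congr_deriv ?_
      ring
    have h2 := (h1.fun_mul (hFd w hw)).fun_add ((hg_diff w hw).hasDerivAt.fun_mul (hpd w hw))
    refine h2.congr_deriv ?_
    ring
  have hVd : ∀ w ∈ strip a b, HasDerivAt V
      ((deriv (deriv g) w + 2 * g w * deriv g w) * (1 - F w) - 2 * deriv g w * p w) w := by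
    intro w hw
    have h1 : HasDerivAt (fun x => deriv g x + g x ^ 2)
        (deriv (deriv g) w + 2 * g w * deriv g w) w := by
      have := (hg'_diff w hw).hasDerivAt.fun_add ((hg_diff w hw).hasDerivAt.fun_pow 2)
      refine this.congr_deriv ?_
      ring
    have h2 := (h1.fun_mul ((hasDerivAt_const w (1:ℝ)).fun_sub (hFd w hw))).fun_sub
      ((hg_diff w hw).hasDerivAt.fun_mul (hpd w hw))
    refine h2.congr_deriv ?_
    ring
  -- U is nonnegative on the strip
  have hUpos : ∀ w ∈ strip a b, 0 ≤ U w := by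
    intro w hw
    rcases le_or_gt 0 (g w) with hgw | hgw
    · exact add_nonneg (mul_nonneg (add_nonneg (hg' w hw) (sq_nonneg _)) (hF0 w))
        (mul_nonneg hgw (hppos w).le)
    · by_contra hU
      push_neg at hU
      have hglt : ∀ x ∈ strip a b ∩ Iic w, g x < 0 :=
        fun x hx => lt_of_le_of_lt (hg_mono hx.1 hw hx.2) hgw
      have hintI : interior (strip a b ∩ Iic w) = strip a b ∩ Iio w := by
        rw [interior_inter, hSo.interior_eq, interior_Iic]
      have hRmono : MonotoneOn (fun x => U x / (g x * g x)) (strip a b ∩ Iic w) := by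
        apply monotoneOn_of_deriv_nonneg (hSc.inter (convex_Iic w))
        · intro x hx
          exact ((hUd x hx.1).continuousAt.div
            (((hg_diff x hx.1).continuousAt).mul ((hg_diff x hx.1).continuousAt))
            (mul_ne_zero (ne_of_lt (hglt x hx)) (ne_of_lt (hglt x hx)))).continuousWithinAt
        · intro x hx
          rw [hintI] at hx
          have hx' : x ∈ strip a b ∩ Iic w := ⟨hx.1, (Set.mem_Iio.1 hx.2).le⟩
          have hgx : g x < 0 := hglt x hx'
          exact (((hUd x hx.1).div
            ((hg_diff x hx.1).hasDerivAt.mul (hg_diff x hx.1).hasDerivAt)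
            (mul_ne_zero (ne_of_lt hgx) (ne_of_lt hgx))).differentiableAt).differentiableWithinAt
        · intro x hx
          rw [hintI] at hx
          have hx' : x ∈ strip a b ∩ Iic w := ⟨hx.1, (Set.mem_Iio.1 hx.2).le⟩
          have hgx : g x < 0 := hglt x hx'
          have hq := (hUd x hx.1).fun_div
            ((hg_diff x hx.1).hasDerivAt.fun_mul (hg_diff x hx.1).hasDerivAt)
            (mul_ne_zero (ne_of_lt hgx) (ne_of_lt hgx))
          rw [hq.deriv]
          apply div_nonneg _ (sq_nonneg _)
          have hnum : ((deriv (deriv g) x + 2 * g x * deriv g x) * F x + 2 * deriv g x * p x)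
                * (g x * g x) - U x * (deriv g x * g x + g x * deriv g x)
              = F x * (g x * (g x * deriv (deriv g) x - 2 * (deriv g x) ^ 2)) := by
            simp only [hUdef]
            ring
          rw [hnum]
          apply mul_nonneg (hF0 x)
          nlinarith [hg_ineq x hx.1, hgx]
      have hUle : ∀ x ∈ strip a b ∩ Iic w, U x ≤ U w := by
        intro x hx
        have hgx : g x < 0 := hglt x hx
        have h1 : U x / (g x * g x) ≤ U w / (g w * g w) := hRmono hx ⟨hw, le_refl w⟩ hx.2
        have hgw2 : (0:ℝ) < g w * g w := mul_pos_of_neg_of_neg hgw hgw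
        have hgx2 : (0:ℝ) < g x * g x := mul_pos_of_neg_of_neg hgx hgx
        have h2 : g w * g w ≤ g x * g x := by nlinarith [hg_mono hx.1 hw hx.2]
        have h3 : U x ≤ U w / (g w * g w) * (g x * g x) := by
          calc U x = U x / (g x * g x) * (g x * g x) :=
                (div_mul_cancel₀ _ (ne_of_gt hgx2)).symm
            _ ≤ U w / (g w * g w) * (g x * g x) := mul_le_mul_of_nonneg_right h1 hgx2.le
        have hneg : U w / (g w * g w) < 0 := div_neg_of_neg_of_pos hU hgw2
        have h4 : U w / (g w * g w) * (g x * g x) ≤ U w := by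
          calc U w / (g w * g w) * (g x * g x) ≤ U w / (g w * g w) * (g w * g w) := by nlinarith
            _ = U w := div_mul_cancel₀ _ (ne_of_gt hgw2)
        exact h3.trans h4
      haveI := neBot_comap_left hw
      have hev1 : ∀ᶠ x in Filter.comap (fun x : ℝ => (x : EReal)) (nhdsWithin a (Set.Ioi a)),
          U w < g x * p x := hlim_a.eventually (eventually_gt_nhds hU)
      obtain ⟨y, ⟨hy1, hy2⟩, hy3⟩ := ((eventually_mem_left hw).and hev1).exists
      have h5 : g y * p y ≤ U y :=
        le_add_of_nonneg_left (mul_nonneg (add_nonneg (hg' y hy1) (sq_nonneg _)) (hF0 y))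
      have h6 := hUle y ⟨hy1, hy2⟩
      exact lt_irrefl (U w) (lt_of_lt_of_le hy3 (h5.trans h6))
  -- V is nonnegative on the strip
  have hVpos : ∀ w ∈ strip a b, 0 ≤ V w := by
    intro w hw
    rcases le_or_gt (g w) 0 with hgw | hgw
    · have h1 : 0 ≤ (deriv g w + g w ^ 2) * (1 - F w) :=
        mul_nonneg (add_nonneg (hg' w hw) (sq_nonneg _)) (by linarith [hF1 w])
      have h2 : g w * p w ≤ 0 := mul_nonpos_of_nonpos_of_nonneg hgw (hppos w).le
      simp only [hVdef]
      linarith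
    · by_contra hV
      push_neg at hV
      have hggt : ∀ x ∈ strip a b ∩ Ici w, 0 < g x :=
        fun x hx => lt_of_lt_of_le hgw (hg_mono hw hx.1 hx.2)
      have hintI : interior (strip a b ∩ Ici w) = strip a b ∩ Ioi w := by
        rw [interior_inter, hSo.interior_eq, interior_Ici]
      have hRanti : AntitoneOn (fun x => V x / (g x * g x)) (strip a b ∩ Ici w) := by
        apply antitoneOn_of_deriv_nonpos (hSc.inter (convex_Ici w))
        · intro x hx
          exact ((hVd x hx.1).continuousAt.div
            (((hg_diff x hx.1).continuousAt).mul ((hg_diff x hx.1).continuousAt))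
            (mul_ne_zero (ne_of_gt (hggt x hx)) (ne_of_gt (hggt x hx)))).continuousWithinAt
        · intro x hx
          rw [hintI] at hx
          have hx' : x ∈ strip a b ∩ Ici w := ⟨hx.1, (Set.mem_Ioi.1 hx.2).le⟩
          have hgx : 0 < g x := hggt x hx'
          exact (((hVd x hx.1).div
            ((hg_diff x hx.1).hasDerivAt.mul (hg_diff x hx.1).hasDerivAt)
            (mul_ne_zero (ne_of_gt hgx) (ne_of_gt hgx))).differentiableAt).differentiableWithinAt
        · intro x hx
          rw [hintI] at hx
          have hx' : x ∈ strip a b ∩ Ici w := ⟨hx.1, (Set.mem_Ioi.1 hx.2).le⟩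
          have hgx : 0 < g x := hggt x hx'
          have hq := (hVd x hx.1).fun_div
            ((hg_diff x hx.1).hasDerivAt.fun_mul (hg_diff x hx.1).hasDerivAt)
            (mul_ne_zero (ne_of_gt hgx) (ne_of_gt hgx))
          rw [hq.deriv]
          apply div_nonpos_of_nonpos_of_nonneg _ (sq_nonneg _)
          have hnum : ((deriv (deriv g) x + 2 * g x * deriv g x) * (1 - F x)
                - 2 * deriv g x * p x) * (g x * g x) - V x * (deriv g x * g x + g x * deriv g x)
              = (1 - F x) * (g x * (g x * deriv (deriv g) x - 2 * (deriv g x) ^ 2)) := by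
            simp only [hVdef]
            ring
          rw [hnum]
          apply mul_nonpos_of_nonneg_of_nonpos (by linarith [hF1 x])
          nlinarith [hg_ineq x hx.1, hgx]
      have hVle : ∀ x ∈ strip a b ∩ Ici w, V x ≤ V w := by
        intro x hx
        have hgx : 0 < g x := hggt x hx
        have h1 : V x / (g x * g x) ≤ V w / (g w * g w) := hRanti ⟨hw, le_refl w⟩ hx hx.2
        have hgw2 : (0:ℝ) < g w * g w := mul_pos hgw hgw
        have hgx2 : (0:ℝ) < g x * g x := mul_pos hgx hgx
        have h2 : g w * g w ≤ g x * g x := by nlinarith [hg_mono hw hx.1 hx.2]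
        have h3 : V x ≤ V w / (g w * g w) * (g x * g x) := by
          calc V x = V x / (g x * g x) * (g x * g x) :=
                (div_mul_cancel₀ _ (ne_of_gt hgx2)).symm
            _ ≤ V w / (g w * g w) * (g x * g x) := mul_le_mul_of_nonneg_right h1 hgx2.le
        have hneg : V w / (g w * g w) < 0 := div_neg_of_neg_of_pos hV hgw2
        have h4 : V w / (g w * g w) * (g x * g x) ≤ V w := by
          calc V w / (g w * g w) * (g x * g x) ≤ V w / (g w * g w) * (g w * g w) := by nlinarith
            _ = V w := div_mul_cancel₀ _ (ne_of_gt hgw2)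
        exact h3.trans h4
      haveI := neBot_comap_right hw
      have hev1 : ∀ᶠ x in Filter.comap (fun x : ℝ => (x : EReal)) (nhdsWithin b (Set.Iio b)),
          g x * p x < -V w := hlim_b.eventually (eventually_lt_nhds (by linarith : (0:ℝ) < -V w))
      obtain ⟨y, ⟨hy1, hy2⟩, hy3⟩ := ((eventually_mem_right hw).and hev1).exists
      have h5 : -(g y * p y) ≤ V y := by
        have : 0 ≤ (deriv g y + g y ^ 2) * (1 - F y) :=
          mul_nonneg (add_nonneg (hg' y hy1) (sq_nonneg _)) (by linarith [hF1 y])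
        simp only [hVdef]
        linarith
      have h6 := hVle y ⟨hy1, hy2⟩
      exact absurd hy3 (not_lt.2 (neg_le.1 (h5.trans h6)))
  -- φ and ψ are monotone
  have hφd : ∀ x ∈ strip a b, HasDerivAt (fun y => g y * F y / p y) (U x / p x) x := by
    intro x hx
    have h := ((hg_diff x hx).hasDerivAt.fun_mul (hFd x hx)).fun_div (hpd x hx) (hppos x).ne'
    refine h.congr_deriv ?_
    have hpne := (hppos x).ne'
    simp only [hUdef]
    field_simp
    ring
  have hφ : MonotoneOn (fun y => g y * F y / p y) (strip a b) := by
    apply monotoneOn_of_deriv_nonneg hSc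
    · exact fun x hx => (hφd x hx).continuousAt.continuousWithinAt
    · intro x hx
      rw [hSo.interior_eq] at hx
      exact (hφd x hx).differentiableAt.differentiableWithinAt
    · intro x hx
      rw [hSo.interior_eq] at hx
      rw [(hφd x hx).deriv]
      exact div_nonneg (hUpos x hx) (hppos x).le
  have hψd : ∀ x ∈ strip a b, HasDerivAt (fun y => g y * (1 - F y) / p y) (V x / p x) x := by
    intro x hx
    have h := ((hg_diff x hx).hasDerivAt.fun_mul
      ((hasDerivAt_const x (1:ℝ)).fun_sub (hFd x hx))).fun_div (hpd x hx) (hppos x).ne'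
    refine h.congr_deriv ?_
    have hpne := (hppos x).ne'
    simp only [hVdef]
    field_simp
    ring
  have hψ : MonotoneOn (fun y => g y * (1 - F y) / p y) (strip a b) := by
    apply monotoneOn_of_deriv_nonneg hSc
    · exact fun x hx => (hψd x hx).continuousAt.continuousWithinAt
    · intro x hx
      rw [hSo.interior_eq] at hx
      exact (hψd x hx).differentiableAt.differentiableWithinAt
    · intro x hx
      rw [hSo.interior_eq] at hx
      rw [(hψd x hx).deriv]
      exact div_nonneg (hVpos x hx) (hppos x).le
  -- conclusion
  intro x hx y hy hxy
  have hFz0 : 0 ≤ F z := hF0 z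
  have hFz1 : 0 ≤ 1 - F z := by linarith [hF1 z]
  simp only [steinSol, ← hpdef, ← hFdef]
  by_cases hxz : x ≤ z
  · by_cases hyz : y ≤ z
    · rw [if_pos hxz, if_pos hyz]
      calc g x * (F x * (1 - F z) / p x) = (1 - F z) * (g x * F x / p x) := by ring
        _ ≤ (1 - F z) * (g y * F y / p y) := mul_le_mul_of_nonneg_left (hφ hx hy hxy) hFz1
        _ = g y * (F y * (1 - F z) / p y) := by ring
    · rw [if_pos hxz, if_neg hyz]
      have hzy : z ≤ y := le_of_lt (not_le.1 hyz)
      calc g x * (F x * (1 - F z) / p x) = (1 - F z) * (g x * F x / p x) := by ring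
        _ ≤ (1 - F z) * (g z * F z / p z) := mul_le_mul_of_nonneg_left (hφ hx hz hxz) hFz1
        _ = F z * (g z * (1 - F z) / p z) := by ring
        _ ≤ F z * (g y * (1 - F y) / p y) := mul_le_mul_of_nonneg_left (hψ hz hy hzy) hFz0
        _ = g y * (F z * (1 - F y) / p y) := by ring
  · have hyz : ¬ y ≤ z := fun h => hxz (hxy.trans h)
    rw [if_neg hxz, if_neg hyz]
    calc g x * (F z * (1 - F x) / p x) = F z * (g x * (1 - F x) / p x) := by ring
      _ ≤ F z * (g y * (1 - F y) / p y) := mul_le_mul_of_nonneg_left (hψ hx hy hxy) hFz0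
      _ = g y * (F z * (1 - F y) / p y) := by ring
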